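/- Let D be a ℂ-linear triangulated category with finite-dimensional Hom-spaces in each degree, and let σ = (Z, P) be a Bridgeland stability condition on D whose heart A = P((0,1]) is the extension closure of a full Ext-exceptional collection {F_1, …, F_m} consisting of σ-stable objects with phases φ_σ(F_i) ∈ (0,1]. Assume that Hom(F_j, F_i[1]) = 0 whenever φ_σ(F_i) < φ_σ(F_j). Then every σ-stable object of D is isomorphic to F_i[k] for some 1 ≤ i ≤ m and some k ∈ ℤ. -/

import Mathlib

open CategoryTheory CategoryTheory.Limits CategoryTheory.Pretriangulated
open scoped BigOperators

universe v u

variable (C : Type u) [Category.{v} C] [Preadditive C] [HasZeroObject C] [HasShift C ℤ]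
  [∀ k : ℤ, (shiftFunctor C k).Additive] [Pretriangulated C]

/-- A Bridgeland stability condition `σ = (Z, P)` on a (pre)triangulated category `C`,
with respect to a finite-rank lattice `Λ`, a class map `cls : C → Λ` (modeling the
projection `K₀(C) → Λ`) and a norm `nrm` on `Λ` (modeling a norm on `Λ ⊗ ℝ`):
a central charge `Z : Λ → ℂ` and full additive (in particular, isomorphism-closed)
subcategories `P(φ)` of semistable objects of phase `φ`, satisfying Bridgeland's axioms,
including Harder–Narasimhan filtrations and the support property. -/
structure BridgelandStabilityCondition {Λ : Type} [AddCommGroup Λ]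
    (cls : C → Λ) (nrm : Λ → ℝ) where
  /-- The central charge. -/
  Z : Λ →+ ℂ
  /-- The semistable objects of each phase. -/
  P : ℝ → Set C
  /-- Each `P(φ)` is closed under isomorphisms (it is a full subcategory). -/
  isoClosed : ∀ (φ : ℝ) (X Y : C), (X ≅ Y) → X ∈ P φ → Y ∈ P φ
  /-- `P(φ)` is additive: it contains zero objects. -/
  zeroMem : ∀ (φ : ℝ) (X : C), IsZero X → X ∈ P φ
  /-- `P(φ)` is additive: it is closed under direct sums. -/
  sumMem : ∀ (φ : ℝ) (X Y : C), X ∈ P φ → Y ∈ P φ → (X ⊞ Y) ∈ P φ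
  /-- Axiom (i): nonzero semistable objects of phase `φ` have central charge in
  `ℝ_{>0} · e^{iπφ}`. -/
  charge : ∀ (φ : ℝ) (X : C), X ∈ P φ → ¬ IsZero X →
    ∃ r : ℝ, 0 < r ∧ Z (cls X) = (r : ℂ) * Complex.exp ((Real.pi : ℂ) * φ * Complex.I)
  /-- Axiom (ii): `P(φ + 1) = P(φ)[1]`. -/
  shiftMem : ∀ (φ : ℝ) (X : C), X ∈ P (φ + 1) ↔ ∃ Y ∈ P φ, Nonempty (X ≅ Y⟦(1 : ℤ)⟧)
  /-- Axiom (iii): no nonzero morphisms from higher to lower phase. -/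
  homZero : ∀ (φ₁ φ₂ : ℝ), φ₂ < φ₁ → ∀ X ∈ P φ₁, ∀ Y ∈ P φ₂, ∀ f : X ⟶ Y, f = 0
  /-- Axiom (iv): Harder–Narasimhan filtrations, as finite towers of distinguished
  triangles with semistable cones of strictly decreasing phases. -/
  HN : ∀ X : C, ¬ IsZero X → ∃ (m : ℕ) (F : Fin (m + 1) → C) (ψ : Fin m → ℝ),
    StrictAnti ψ ∧ IsZero (F 0) ∧ Nonempty (F (Fin.last m) ≅ X) ∧
    ∀ j : Fin m, ∃ (A : C) (_ : A ∈ P (ψ j)) (f : F j.castSucc ⟶ F j.succ)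
      (g : F j.succ ⟶ A) (h : A ⟶ (F j.castSucc)⟦(1 : ℤ)⟧),
        Triangle.mk f g h ∈ distTriang C
  /-- Axiom (v): the support property. -/
  support : ∃ K : ℝ, 0 < K ∧ ∀ (φ : ℝ), ∀ X ∈ P φ, K * nrm (cls X) ≤ ‖Z (cls X)‖

namespace BridgelandStabilityCondition

variable {C} {Λ : Type} [AddCommGroup Λ] {cls : C → Λ} {nrm : Λ → ℝ}

/-- An object is `σ`-semistable of phase `φ` if it is a nonzero object of `P(φ)`. -/
def IsSemistable (σ : BridgelandStabilityCondition C cls nrm) (φ : ℝ) (X : C) : Prop :=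
  X ∈ σ.P φ ∧ ¬ IsZero X

/-- An object is `σ`-stable of phase `φ` if it is semistable of phase `φ` and admits no
short exact sequence (distinguished triangle) `A → X → B` with `A, B` nonzero objects of
`P(φ)`. -/
def IsStable (σ : BridgelandStabilityCondition C cls nrm) (φ : ℝ) (X : C) : Prop :=
  σ.IsSemistable φ X ∧
    ∀ (A B : C), A ∈ σ.P φ → ¬ IsZero A → B ∈ σ.P φ → ¬ IsZero B →
      ∀ (f : A ⟶ X) (g : X ⟶ B) (h : B ⟶ A⟦(1 : ℤ)⟧),
        Triangle.mk f g h ∉ distTriang C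

end BridgelandStabilityCondition

/-- `S` generates `C` as a triangulated category: every class of objects closed under
isomorphisms, shifts and extensions (cones) which contains `S` contains every object. -/
def TriangulatedGenerates (S : Set C) : Prop :=
  ∀ T : Set C,
    (∀ X Y : C, (X ≅ Y) → X ∈ T → Y ∈ T) →
    (∀ X ∈ T, ∀ k : ℤ, X⟦k⟧ ∈ T) →
    (∀ Tr : Triangle C, Tr ∈ (distTriang C) → Tr.obj₁ ∈ T → Tr.obj₃ ∈ T → Tr.obj₂ ∈ T) →
    S ⊆ T → ∀ X : C, X ∈ T

/-- The extension closure of a set of objects: the smallest class of objects containing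
`S` and all zero objects, and closed under isomorphisms and extensions
(if `A → B → C` is a distinguished triangle with `A, C` in the class, so is `B`). -/
def extensionClosure (S : Set C) : Set C :=
  ⋂₀ {T : Set C | S ⊆ T ∧ (∀ X Y : C, (X ≅ Y) → X ∈ T → Y ∈ T) ∧
      (∀ X : C, IsZero X → X ∈ T) ∧
      (∀ Tr : Triangle C, Tr ∈ (distTriang C) → Tr.obj₁ ∈ T → Tr.obj₃ ∈ T → Tr.obj₂ ∈ T)}

/-- The heart `A = P((0,1])` of a stability condition: the extension-closed subcategory
generated by the semistable objects of phase in `(0, 1]`. -/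
def BridgelandStabilityCondition.heart {Λ : Type} [AddCommGroup Λ] {cls : C → Λ}
    {nrm : Λ → ℝ} (σ : BridgelandStabilityCondition C cls nrm) : Set C :=
  extensionClosure C (⋃ φ ∈ Set.Ioc (0 : ℝ) 1, σ.P φ)


set_option linter.unusedSectionVars false
set_option linter.unusedVariables false


set_option linter.unusedSectionVars false

namespace StmtAux

variable {C : Type u} [Category.{v} C] [Preadditive C] [HasZeroObject C] [HasShift C ℤ]
  [∀ k : ℤ, (shiftFunctor C k).Additive] [Pretriangulated C]

/-- Inductive description of the extension closure. -/
inductive EC (S : Set C) : C → Prop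
  | of {X : C} (hX : X ∈ S) : EC S X
  | zero {X : C} (hX : IsZero X) : EC S X
  | iso {X Y : C} (e : X ≅ Y) (hX : EC S X) : EC S Y
  | ext (T : Triangle C) (hT : T ∈ distTriang C) (h1 : EC S T.obj₁) (h3 : EC S T.obj₃) :
      EC S T.obj₂

lemma EC.mono {S S' : Set C} (hSS : S ⊆ S') {X : C} (h : EC S X) : EC S' X := by
  induction h with
  | of hX => exact EC.of (hSS hX)
  | zero hX => exact EC.zero hX
  | iso e _ ih => exact EC.iso e ih
  | ext T hT _ _ ih1 ih3 => exact EC.ext T hT ih1 ih3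

lemma isZero_shift_iff (n : ℤ) (X : C) : IsZero (X⟦n⟧) ↔ IsZero X := by
  simp only [IsZero.iff_id_eq_zero]
  constructor
  · intro h
    apply (shiftFunctor C n).map_injective
    rw [CategoryTheory.Functor.map_id, CategoryTheory.Functor.map_zero, h]
  · intro h
    rw [← CategoryTheory.Functor.map_id, h, CategoryTheory.Functor.map_zero]

lemma shiftHomZero {A B : C} (k k' : ℤ) (hkk : k + k' = 0)
    (h : ∀ f : A ⟶ B⟦k'⟧, f = 0) (g : A⟦k⟧ ⟶ B) : g = 0 := by
  have e : _ ≅ A := (shiftFunctorCompIsoId C k k' hkk).app A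
  have h3 : e.inv ≫ (shiftFunctor C k').map g = 0 := h _
  have h4 : (shiftFunctor C k').map g = 0 := by
    have h5 := congrArg (fun t => e.hom ≫ t) h3
    simpa using h5
  apply (shiftFunctor C k').map_injective
  rw [h4, CategoryTheory.Functor.map_zero]

/-- Covariant Hom-vanishing propagates through the extension closure. -/
lemma EC.homFromZero {S : Set C} {W : C} {k : ℤ}
    (base : ∀ Z ∈ S, ∀ f : W ⟶ Z⟦k⟧, f = 0) :
    ∀ {Y : C}, EC S Y → ∀ f : W ⟶ Y⟦k⟧, f = 0 := by
  intro Y h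
  induction h with
  | of hX => exact base _ hX
  | zero hX =>
    intro f
    exact ((isZero_shift_iff k _).2 hX).eq_of_tgt f 0
  | iso e hX ih =>
    intro f
    have h1 : f ≫ (shiftFunctor C k).map e.inv = 0 := ih _
    have : f = (f ≫ (shiftFunctor C k).map e.inv) ≫ (shiftFunctor C k).map e.hom := by
      rw [Category.assoc, ← Functor.map_comp, e.inv_hom_id, CategoryTheory.Functor.map_id,
        Category.comp_id]
    rw [this, h1, Limits.zero_comp]
  | ext T hT h1 h3 ih1 ih3 =>
    intro f
    have hT' : (Triangle.shiftFunctor C k).obj T ∈ distTriang C :=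
      Triangle.shift_distinguished T hT k
    have hf : f ≫ ((Triangle.shiftFunctor C k).obj T).mor₂ = 0 := ih3 _
    obtain ⟨g, hg⟩ := Triangle.coyoneda_exact₂ _ hT' f hf
    rw [hg, ih1 g]; exact Limits.zero_comp

/-- Contravariant Hom-vanishing propagates through the extension closure. -/
lemma EC.homToZero {S : Set C} {W : C} {k : ℤ}
    (base : ∀ Z ∈ S, ∀ f : Z⟦k⟧ ⟶ W, f = 0) :
    ∀ {Y : C}, EC S Y → ∀ f : Y⟦k⟧ ⟶ W, f = 0 := by
  intro Y h
  induction h with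
  | of hX => exact base _ hX
  | zero hX =>
    intro f
    exact ((isZero_shift_iff k _).2 hX).eq_of_src f 0
  | iso e hX ih =>
    intro f
    have h1 : (shiftFunctor C k).map e.hom ≫ f = 0 := ih _
    have : f = (shiftFunctor C k).map e.inv ≫ ((shiftFunctor C k).map e.hom ≫ f) := by
      rw [← Category.assoc, ← Functor.map_comp, e.inv_hom_id, CategoryTheory.Functor.map_id,
        Category.id_comp]
    rw [this, h1, Limits.comp_zero]
  | ext T hT h1 h3 ih1 ih3 =>
    intro f
    have hT' : (Triangle.shiftFunctor C k).obj T ∈ distTriang C :=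
      Triangle.shift_distinguished T hT k
    have hf : ((Triangle.shiftFunctor C k).obj T).mor₁ ≫ f = 0 := ih1 _
    obtain ⟨g, hg⟩ := Triangle.yoneda_exact₂ _ hT' f hf
    rw [hg, ih3 g]; exact Limits.comp_zero

end StmtAux

namespace StmtAux

variable {C : Type u} [Category.{v} C] [Preadditive C] [HasZeroObject C] [HasShift C ℤ]
  [∀ k : ℤ, (shiftFunctor C k).Additive] [Pretriangulated C]
  {Λ : Type} [AddCommGroup Λ] {cls : C → Λ} {nrm : Λ → ℝ}

lemma shiftDown (σ : BridgelandStabilityCondition C cls nrm) (θ : ℝ) (Y : C)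
    (hY : Y ∈ σ.P θ) : Y⟦(-1 : ℤ)⟧ ∈ σ.P (θ - 1) := by
  have h0 : Y ∈ σ.P ((θ - 1) + 1) := by rwa [sub_add_cancel]
  obtain ⟨W, hW, ⟨e⟩⟩ := (σ.shiftMem (θ - 1) Y).1 h0
  have e2 : Y⟦(-1 : ℤ)⟧ ≅ W :=
    ((shiftFunctor C (-1 : ℤ)).mapIso e).trans
      ((shiftFunctorCompIsoId C (1 : ℤ) (-1 : ℤ) (by ring)).app W)
  exact σ.isoClosed _ W _ e2.symm hW

lemma shiftP (σ : BridgelandStabilityCondition C cls nrm) (n : ℤ) (φ : ℝ) (X : C)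
    (hX : X ∈ σ.P φ) : X⟦n⟧ ∈ σ.P (φ + n) := by
  induction n using Int.induction_on with
  | zero =>
    have harith : φ + ((0 : ℤ) : ℝ) = φ := by push_cast; ring
    rw [harith]
    exact σ.isoClosed _ X _ ((shiftFunctorZero C ℤ).app X).symm hX
  | succ k ih =>
    have harith : φ + (((k : ℤ) + 1 : ℤ) : ℝ) = (φ + (k : ℤ)) + 1 := by push_cast; ring
    rw [harith]
    have h1 : (X⟦(k : ℤ)⟧)⟦(1 : ℤ)⟧ ∈ σ.P ((φ + (k : ℤ)) + 1) :=
      (σ.shiftMem (φ + (k : ℤ)) _).2 ⟨X⟦(k : ℤ)⟧, ih, ⟨Iso.refl _⟩⟩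
    exact σ.isoClosed _ _ _ ((shiftFunctorAdd' C (k : ℤ) 1 ((k : ℤ) + 1) rfl).app X).symm h1
  | pred k ih =>
    have harith : φ + ((-(k : ℤ) - 1 : ℤ) : ℝ) = (φ + (-(k : ℤ) : ℤ)) - 1 := by push_cast; ring
    rw [harith]
    have h1 : (X⟦(-(k : ℤ) : ℤ)⟧)⟦(-1 : ℤ)⟧ ∈ σ.P ((φ + (-(k : ℤ) : ℤ)) - 1) :=
      shiftDown σ _ _ ih
    exact σ.isoClosed _ _ _
      ((shiftFunctorAdd' C (-(k : ℤ)) (-1) (-(k : ℤ) - 1) (by ring)).app X).symm h1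

lemma isStable_of_iso (σ : BridgelandStabilityCondition C cls nrm) {φ : ℝ} {X Y : C}
    (e : X ≅ Y) (hst : σ.IsStable φ X) : σ.IsStable φ Y := by
  obtain ⟨⟨hP, hnz⟩, htri⟩ := hst
  refine ⟨⟨σ.isoClosed _ _ _ e hP, fun hz => hnz (hz.of_iso e)⟩, ?_⟩
  intro A B hA hnA hB hnB f g h hdist
  apply htri A B hA hnA hB hnB (f ≫ e.inv) (e.hom ≫ g) h
  refine isomorphic_distinguished _ hdist _ ?_
  exact Triangle.isoMk _ _ (Iso.refl _) e (Iso.refl _) (by simp [Triangle.mk]) (by simp [Triangle.mk]) (by simp [Triangle.mk])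

lemma isStable_shift (σ : BridgelandStabilityCondition C cls nrm) {φ : ℝ} {X : C}
    (hst : σ.IsStable φ X) (n : ℤ) : σ.IsStable (φ + n) (X⟦n⟧) := by
  obtain ⟨⟨hP, hnz⟩, htri⟩ := hst
  refine ⟨⟨shiftP σ n φ X hP, fun hz => hnz ((isZero_shift_iff n X).1 hz)⟩, ?_⟩
  intro A B hA hnA hB hnB f g hh hdist
  have hT' : (Triangle.shiftFunctor C (-n)).obj (Triangle.mk f g hh) ∈ distTriang C :=
    Triangle.shift_distinguished _ hdist (-n)
  set ST := (Triangle.shiftFunctor C (-n)).obj (Triangle.mk f g hh) with hST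
  set e : (X⟦n⟧)⟦(-n : ℤ)⟧ ≅ X := (shiftFunctorCompIsoId C n (-n) (by ring)).app X with he
  have hT'' : Triangle.mk (ST.mor₁ ≫ e.hom) (e.inv ≫ ST.mor₂) ST.mor₃ ∈ distTriang C := by
    refine isomorphic_distinguished _ hT' _ ?_
    exact Triangle.isoMk _ _ (Iso.refl _) e.symm (Iso.refl _) (by simp [Triangle.mk]; exact (Category.assoc _ _ _).trans ((congrArg (ST.mor₁ ≫ ·) e.hom_inv_id).trans (Category.comp_id _))) (by simp [Triangle.mk]; rfl) (by simp [Triangle.mk])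
  have harith : (φ + (n : ℝ)) + ((-n : ℤ) : ℝ) = φ := by push_cast; ring
  have hAP : A⟦(-n : ℤ)⟧ ∈ σ.P φ := by
    have := shiftP σ (-n) _ _ hA; rwa [harith] at this
  have hBP : B⟦(-n : ℤ)⟧ ∈ σ.P φ := by
    have := shiftP σ (-n) _ _ hB; rwa [harith] at this
  exact htri (A⟦(-n : ℤ)⟧) (B⟦(-n : ℤ)⟧) hAP
    (fun hz => hnA ((isZero_shift_iff (-n) A).1 hz)) hBP
    (fun hz => hnB ((isZero_shift_iff (-n) B).1 hz))
    (ST.mor₁ ≫ e.hom) (e.inv ≫ ST.mor₂) ST.mor₃ hT''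

end StmtAux

namespace StmtAux

variable {C : Type u} [Category.{v} C] [Preadditive C] [HasZeroObject C] [HasShift C ℤ]
  [∀ k : ℤ, (shiftFunctor C k).Additive] [Pretriangulated C]
  {Λ : Type} [AddCommGroup Λ] {cls : C → Λ} {nrm : Λ → ℝ}

/-- `P(φ)` is closed under extensions. -/
lemma extP (σ : BridgelandStabilityCondition C cls nrm) {φ : ℝ} (T : Triangle C)
    (hT : T ∈ distTriang C) (h₁ : T.obj₁ ∈ σ.P φ) (h₃ : T.obj₃ ∈ σ.P φ) :
    T.obj₂ ∈ σ.P φ := by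
  classical
  by_cases hz : IsZero T.obj₂
  · exact σ.zeroMem φ _ hz
  obtain ⟨N, G, χ, hχ, hG0, ⟨eG⟩, hcones⟩ := σ.HN T.obj₂ hz
  choose A hA f g h hdist using hcones
  have hSne : ∃ j : Fin N, ¬ IsZero (A j) := by
    by_contra hall
    push_neg at hall
    have hGz : ∀ k : Fin (N + 1), IsZero (G k) := by
      intro k
      induction k using Fin.induction with
      | zero => exact hG0
      | succ j ih =>
        exact Triangle.isZero₂_of_isZero₁₃ _ (hdist j) ih (hall j)
    exact hz ((hGz (Fin.last N)).of_iso eG.symm)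
  set Sf : Finset (Fin N) := Finset.univ.filter (fun j => ¬ IsZero (A j)) with hSf
  have hSfne : Sf.Nonempty := by
    obtain ⟨j, hj⟩ := hSne
    exact ⟨j, by simp [hSf, hj]⟩
  set j0 := Sf.min' hSfne with hj0def
  set j1 := Sf.max' hSfne with hj1def
  have hj0mem : ¬ IsZero (A j0) := by
    have := Sf.min'_mem hSfne
    simpa [hSf] using this
  have hj1mem : ¬ IsZero (A j1) := by
    have := Sf.max'_mem hSfne
    simpa [hSf] using this
  have hj0min : ∀ j : Fin N, ¬ IsZero (A j) → j0 ≤ j :=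
    fun j hj => Sf.min'_le j (by simp [hSf, hj])
  have hj1max : ∀ j : Fin N, ¬ IsZero (A j) → j ≤ j1 :=
    fun j hj => Sf.le_max' j (by simp [hSf, hj])
  -- every term of the tower below `j0` is zero
  have hzero_le : ∀ p : ℕ, p ≤ (j0 : ℕ) → ∀ hpN : p < N + 1, IsZero (G ⟨p, hpN⟩) := by
    intro p
    induction p with
    | zero =>
      intro _ hpN
      exact hG0.of_iso (eqToIso (by congr))
    | succ p ih =>
      intro hple hpN
      have hpN' : p < N := by
        have := j0.isLt
        omega
      have hAz : IsZero (A ⟨p, hpN'⟩) := by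
        by_contra hAnz
        have hle := hj0min _ hAnz
        have : (j0 : ℕ) ≤ p := hle
        omega
      have hprev : IsZero (G ⟨p, by omega⟩) := ih (by omega) _
      exact Triangle.isZero₂_of_isZero₁₃ _ (hdist ⟨p, hpN'⟩) hprev hAz
  have hIsoG0 : IsIso (g j0) :=
    (Triangle.isZero₁_iff_isIso₂ _ (hdist j0)).1
      (hzero_le (j0 : ℕ) le_rfl (by omega))
  have hGj0P : G j0.succ ∈ σ.P (χ j0) := σ.isoClosed _ _ _ (asIso (g j0)).symm (hA j0)
  have hGj0nz : ¬ IsZero (G j0.succ) := fun hzz => hj0mem (hzz.of_iso (asIso (g j0)).symm)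
  -- nonzero maps up the tower
  have hup : ∀ p : ℕ, (hp1 : (j0 : ℕ) + 1 ≤ p) → ∀ hpN : p < N + 1,
      ∃ u : G j0.succ ⟶ G ⟨p, hpN⟩, u ≠ 0 := by
    intro p hp1
    induction p, hp1 using Nat.le_induction with
    | base =>
      intro hpN
      exact ⟨𝟙 _, fun h0 => hGj0nz ((IsZero.iff_id_eq_zero _).2 h0)⟩
    | succ p hp ih =>
      intro hpN
      obtain ⟨u, hu⟩ := ih (by omega)
      have hpN' : p < N := by omega
      refine ⟨u ≫ f ⟨p, hpN'⟩, fun h0 => hu ?_⟩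
      obtain ⟨w, hw⟩ := Triangle.coyoneda_exact₂ _
        (inv_rot_of_distTriang _ (hdist ⟨p, hpN'⟩)) u h0
      have hwP : (A ⟨p, hpN'⟩)⟦(-1 : ℤ)⟧ ∈ σ.P (χ ⟨p, hpN'⟩ + ((-1 : ℤ) : ℝ)) :=
        shiftP σ (-1) _ _ (hA _)
      have hw0 : w = 0 := by
        refine σ.homZero (χ j0) (χ ⟨p, hpN'⟩ + ((-1 : ℤ) : ℝ)) ?_ _ hGj0P _ hwP w
        have hle : χ ⟨p, hpN'⟩ ≤ χ j0 := hχ.antitone (by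
          show (j0 : ℕ) ≤ p
          omega)
        push_cast
        linarith
      rw [hw, hw0]; exact Limits.zero_comp
  obtain ⟨u, hu⟩ := hup N (by have := j0.isLt; omega) (by omega)
  have hv : (u ≫ eG.hom) ≠ 0 := fun h0 => hu (by
    have huu : u = (u ≫ eG.hom) ≫ eG.inv := by simp
    rw [huu, h0, Limits.zero_comp])
  have hle0 : χ j0 ≤ φ := by
    by_contra hgt
    push_neg at hgt
    have h2 : (u ≫ eG.hom) ≫ T.mor₂ = 0 := σ.homZero _ _ hgt _ hGj0P _ h₃ _
    obtain ⟨w, hw⟩ := Triangle.coyoneda_exact₂ T hT _ h2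
    exact hv (by rw [hw, σ.homZero _ _ hgt _ hGj0P _ h₁ w, Limits.zero_comp])
  -- above `j1`, the tower maps are isomorphisms
  have hdown : ∀ p : ℕ, (hp1 : (j1 : ℕ) + 1 ≤ p) → ∀ hpN : p < N + 1,
      Nonempty (G ⟨p, hpN⟩ ≅ G j1.succ) := by
    intro p hp1
    induction p, hp1 using Nat.le_induction with
    | base => intro hpN; exact ⟨Iso.refl _⟩
    | succ p hp ih =>
      intro hpN
      obtain ⟨e⟩ := ih (by omega)
      have hpN' : p < N := by omega
      have hAz : IsZero (A ⟨p, hpN'⟩) := by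
        by_contra hAnz
        have hle := hj1max _ hAnz
        have : p ≤ (j1 : ℕ) := hle
        omega
      have : IsIso (f ⟨p, hpN'⟩) := (Triangle.isZero₃_iff_isIso₁ _ (hdist ⟨p, hpN'⟩)).1 hAz
      exact ⟨(asIso (f ⟨p, hpN'⟩)).symm.trans e⟩
  obtain ⟨eDown⟩ := hdown N (by have := j1.isLt; omega) (by omega)
  have eE : T.obj₂ ≅ G j1.succ := eG.symm.trans eDown
  -- no maps from shifted low tower terms into `A j1`
  have hv1 : ∀ p : ℕ, p ≤ (j1 : ℕ) → ∀ hpN : p < N + 1,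
      ∀ w : (G ⟨p, hpN⟩)⟦(1 : ℤ)⟧ ⟶ A j1, w = 0 := by
    intro p
    induction p with
    | zero =>
      intro _ hpN w
      have h0 : IsZero (G ⟨0, hpN⟩) := hG0.of_iso (eqToIso (by congr))
      exact ((isZero_shift_iff 1 _).2 h0).eq_of_src w 0
    | succ p ih =>
      intro hple hpN w
      have hpN' : p < N := by omega
      have hST : (Triangle.shiftFunctor C 1).obj (Triangle.mk (f ⟨p, hpN'⟩) (g ⟨p, hpN'⟩)
          (h ⟨p, hpN'⟩)) ∈ distTriang C :=
        Triangle.shift_distinguished _ (hdist ⟨p, hpN'⟩) 1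
      have hw1 : ((Triangle.shiftFunctor C 1).obj (Triangle.mk (f ⟨p, hpN'⟩) (g ⟨p, hpN'⟩)
          (h ⟨p, hpN'⟩))).mor₁ ≫ w = 0 := ih (by omega) (by omega) _
      obtain ⟨w', hw'⟩ := Triangle.yoneda_exact₂ _ hST w hw1
      have hw'0 : w' = 0 := by
        refine σ.homZero (χ ⟨p, hpN'⟩ + ((1 : ℤ) : ℝ)) (χ j1) ?_ _
          (shiftP σ 1 _ _ (hA _)) _ (hA j1) w'
        have hle : χ j1 ≤ χ ⟨p, hpN'⟩ := hχ.antitone (by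
          show p ≤ (j1 : ℕ)
          omega)
        push_cast
        linarith
      rw [hw', hw'0]; exact Limits.comp_zero
  have hgj1 : g j1 ≠ 0 := by
    intro hg0
    have hrot : (Triangle.mk (f j1) (g j1) (h j1)).rotate ∈ distTriang C :=
      rot_of_distTriang _ (hdist j1)
    obtain ⟨w, hw⟩ := Triangle.yoneda_exact₂ _ hrot (𝟙 (A j1)) (by
      show g j1 ≫ 𝟙 (A j1) = 0
      rw [hg0, Limits.zero_comp])
    have hw0 : w = 0 := hv1 (j1 : ℕ) le_rfl (by omega) w
    rw [hw0, Limits.comp_zero] at hw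
    exact hj1mem ((IsZero.iff_id_eq_zero _).2 hw)
  have hge1 : φ ≤ χ j1 := by
    by_contra hlt
    push_neg at hlt
    have hd : T.mor₁ ≫ (eE.hom ≫ g j1) = 0 := σ.homZero φ (χ j1) hlt _ h₁ _ (hA j1) _
    obtain ⟨w, hw⟩ := Triangle.yoneda_exact₂ T hT _ hd
    have hw0 : w = 0 := σ.homZero φ (χ j1) hlt _ h₃ _ (hA j1) w
    rw [hw0, Limits.comp_zero] at hw
    apply hgj1
    have hg : g j1 = eE.inv ≫ (eE.hom ≫ g j1) := by simp
    rw [hg, hw, Limits.comp_zero]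
  have hj01 : j0 = j1 := by
    have hle : j0 ≤ j1 := Sf.min'_le j1 (Sf.max'_mem hSfne)
    rcases eq_or_lt_of_le hle with heq | hlt
    · exact heq
    · exact absurd (hχ hlt) (not_lt.2 (le_trans hle0 hge1))
  have hφχ : χ j0 = φ := by
    refine le_antisymm hle0 ?_
    rw [hj01]
    exact hge1
  have hIsoG1 : IsIso (g j1) := hj01 ▸ hIsoG0
  have efinal : A j0 ≅ T.obj₂ := by
    rw [hj01]
    exact (eE.trans (asIso (g j1))).symm
  have hAP : A j0 ∈ σ.P φ := hφχ ▸ hA j0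
  exact σ.isoClosed φ (A j0) T.obj₂ efinal hAP

end StmtAux

namespace StmtAux

variable {C : Type u} [Category.{v} C] [Preadditive C] [HasZeroObject C] [HasShift C ℤ]
  [∀ k : ℤ, (shiftFunctor C k).Additive] [Pretriangulated C]
  {Λ : Type} [AddCommGroup Λ] {cls : C → Λ} {nrm : Λ → ℝ}

/-- If an object of the extension closure of the collection receives no nonzero map
from any `F i` of phase `> t`, it lies in the extension closure of the low part. -/
lemma claimC {m : ℕ} {F : Fin m → C} {ψ : Fin m → ℝ}
    (hext1 : ∀ i j : Fin m, ψ i < ψ j → ∀ f : F j ⟶ (F i)⟦(1 : ℤ)⟧, f = 0)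
    (base1 : ∀ i j : Fin m, ∀ f : F i ⟶ (F j)⟦(-1 : ℤ)⟧, f = 0) (t : ℝ) :
    ∀ {Y : C}, EC (Set.range F) Y → (∀ i, t < ψ i → ∀ f : F i ⟶ Y, f = 0) →
      EC {Z | ∃ l, ψ l ≤ t ∧ Z = F l} Y := by
  intro Y hY
  induction hY with
  | of hX =>
    obtain ⟨j, rfl⟩ := hX
    intro hyp
    by_cases hj : ψ j ≤ t
    · exact EC.of ⟨j, hj, rfl⟩
    · push_neg at hj
      exact EC.zero ((IsZero.iff_id_eq_zero _).2 (hyp j hj (𝟙 _)))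
  | zero hX => exact fun _ => EC.zero hX
  | iso e hX ih =>
    intro hyp
    refine EC.iso e (ih ?_)
    intro i hi f
    have hc : (f ≫ e.hom) = 0 := hyp i hi _
    have hf : f = (f ≫ e.hom) ≫ e.inv := by simp
    rw [hf, hc, Limits.zero_comp]
  | ext T hT h1 h3 ih1 ih3 =>
    intro hyp
    have hypA : ∀ i, t < ψ i → ∀ u : F i ⟶ T.obj₁, u = 0 := by
      intro i hi u
      obtain ⟨w, hw⟩ := Triangle.coyoneda_exact₂ _ (inv_rot_of_distTriang _ hT) u
        (hyp i hi (u ≫ T.mor₁))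
      rw [hw, EC.homFromZero (fun Z hZ => by
        obtain ⟨l, rfl⟩ := hZ; exact base1 i l) h3 w]; exact Limits.zero_comp
    have hA' := ih1 hypA
    have hypB : ∀ i, t < ψ i → ∀ u : F i ⟶ T.obj₃, u = 0 := by
      intro i hi u
      have hobs : u ≫ T.mor₃ = 0 := by
        refine EC.homFromZero ?_ hA' (u ≫ T.mor₃)
        intro Z hZ f
        obtain ⟨l, hl, rfl⟩ := hZ
        exact hext1 l i (lt_of_le_of_lt hl hi) f
      obtain ⟨w, hw⟩ := Triangle.coyoneda_exact₃ _ hT u hobs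
      rw [hw, hyp i hi w, Limits.zero_comp]
    exact EC.ext T hT hA' (ih3 hypB)

/-- If an object of the extension closure of the low part has no nonzero map to
any `F j` of phase `< φ`, it lies in the extension closure of the phase-`φ` part. -/
lemma claimC' {m : ℕ} {F : Fin m → C} {ψ : Fin m → ℝ}
    (hext1 : ∀ i j : Fin m, ψ i < ψ j → ∀ f : F j ⟶ (F i)⟦(1 : ℤ)⟧, f = 0)
    (base1 : ∀ i j : Fin m, ∀ f : F i ⟶ (F j)⟦(-1 : ℤ)⟧, f = 0) (φ : ℝ) :
    ∀ {Y : C}, EC {Z | ∃ l, ψ l ≤ φ ∧ Z = F l} Y →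
      (∀ j, ψ j < φ → ∀ f : Y ⟶ F j, f = 0) →
      EC {Z | ∃ l, ψ l = φ ∧ Z = F l} Y := by
  intro Y hY
  induction hY with
  | of hX =>
    obtain ⟨l, hl, rfl⟩ := hX
    intro hyp
    rcases eq_or_lt_of_le hl with heq | hlt
    · exact EC.of ⟨l, heq, rfl⟩
    · exact EC.zero ((IsZero.iff_id_eq_zero _).2 (hyp l hlt (𝟙 _)))
  | zero hX => exact fun _ => EC.zero hX
  | iso e hX ih =>
    intro hyp
    refine EC.iso e (ih ?_)
    intro j hj f
    have hc : e.inv ≫ f = 0 := hyp j hj _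
    have hf : f = e.hom ≫ (e.inv ≫ f) := by simp
    rw [hf, hc, Limits.comp_zero]
  | ext T hT h1 h3 ih1 ih3 =>
    intro hyp
    have hypB : ∀ j, ψ j < φ → ∀ u : T.obj₃ ⟶ F j, u = 0 := by
      intro j hj u
      obtain ⟨w, hw⟩ := Triangle.yoneda_exact₃ _ hT u (hyp j hj (T.mor₂ ≫ u))
      rw [hw, EC.homToZero (fun Z hZ f => by
        obtain ⟨l, _, rfl⟩ := hZ
        exact shiftHomZero 1 (-1) (by ring) (base1 l j) f) h1 w, Limits.comp_zero]
    have hB' := ih3 hypB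
    have hypA : ∀ j, ψ j < φ → ∀ u : T.obj₁ ⟶ F j, u = 0 := by
      intro j hj u
      have hobs : T.invRotate.mor₁ ≫ u = 0 := by
        refine EC.homToZero ?_ hB' _
        intro Z hZ f
        obtain ⟨l, hl, rfl⟩ := hZ
        refine shiftHomZero (-1) 1 (by ring) (hext1 j l ?_) f
        rw [hl]
        exact hj
      obtain ⟨w, hw⟩ := Triangle.yoneda_exact₂ _ (inv_rot_of_distTriang _ hT) u hobs
      rw [hw, hyp j hj w]; exact Limits.comp_zero
    exact EC.ext T hT (ih1 hypA) hB'

lemma EC_P (σ : BridgelandStabilityCondition C cls nrm) {m : ℕ} {F : Fin m → C}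
    {ψ : Fin m → ℝ} (hFP : ∀ l, F l ∈ σ.P (ψ l)) (φ : ℝ) :
    ∀ {Y : C}, EC {Z | ∃ l : Fin m, ψ l = φ ∧ Z = F l} Y → Y ∈ σ.P φ := by
  intro Y hY
  induction hY with
  | of hX => obtain ⟨l, hl, rfl⟩ := hX; exact hl ▸ hFP l
  | zero hX => exact σ.zeroMem _ _ hX
  | iso e _ ih => exact σ.isoClosed _ _ _ e ih
  | ext T hT _ _ ih1 ih3 => exact extP σ T hT ih1 ih3

lemma endgame (σ : BridgelandStabilityCondition C cls nrm) {m : ℕ} {F : Fin m → C}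
    {ψ : Fin m → ℝ} (hFP : ∀ l, F l ∈ σ.P (ψ l)) (φ : ℝ) :
    ∀ {Y : C}, EC {Z | ∃ l : Fin m, ψ l = φ ∧ Z = F l} Y → σ.IsStable φ Y →
      ∃ l : Fin m, Nonempty (Y ≅ F l) := by
  intro Y hY
  induction hY with
  | of hX =>
    obtain ⟨l, _, rfl⟩ := hX
    exact fun _ => ⟨l, ⟨Iso.refl _⟩⟩
  | zero hX => exact fun hst => absurd hX hst.1.2
  | iso e hX ih =>
    intro hst
    obtain ⟨l, ⟨e'⟩⟩ := ih (isStable_of_iso σ e.symm hst)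
    exact ⟨l, ⟨e.symm.trans e'⟩⟩
  | ext T hT h1 h3 ih1 ih3 =>
    intro hst
    by_cases hz1 : IsZero T.obj₁
    · have : IsIso T.mor₂ := (Triangle.isZero₁_iff_isIso₂ _ hT).1 hz1
      obtain ⟨l, ⟨e'⟩⟩ := ih3 (isStable_of_iso σ (asIso T.mor₂) hst)
      exact ⟨l, ⟨(asIso T.mor₂).trans e'⟩⟩
    · by_cases hz3 : IsZero T.obj₃
      · have : IsIso T.mor₁ := (Triangle.isZero₃_iff_isIso₁ _ hT).1 hz3
        obtain ⟨l, ⟨e'⟩⟩ := ih1 (isStable_of_iso σ (asIso T.mor₁).symm hst)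
        exact ⟨l, ⟨(asIso T.mor₁).symm.trans e'⟩⟩
      · exact absurd hT (hst.2 T.obj₁ T.obj₃ (EC_P σ hFP φ h1) hz1 (EC_P σ hFP φ h3) hz3
          T.mor₁ T.mor₂ T.mor₃)

end StmtAux

/-- The classification of stable objects used in Propositions 3.2 and A.1 of the paper:
if the heart `P((0,1])` of a stability condition `σ` on a ℂ-linear triangulated category
with finite-dimensional Hom-spaces is the extension closure of a full Ext-exceptional
collection `F_1, …, F_m` of `σ`-stable objects of phases in `(0,1]`, and
`Hom(F_j, F_i[1]) = 0` whenever `φ_σ(F_i) < φ_σ(F_j)`, then every `σ`-stable object is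
isomorphic to some shift `F_i[k]`. -/
theorem stmt_4 {C : Type u} [Category.{v} C] [Preadditive C] [CategoryTheory.Linear ℂ C]
    [HasZeroObject C] [HasShift C ℤ] [∀ k : ℤ, (shiftFunctor C k).Additive]
    [Pretriangulated C] [∀ X Y : C, FiniteDimensional ℂ (X ⟶ Y)]
    {Λ : Type} [AddCommGroup Λ] (cls : C → Λ) (nrm : Λ → ℝ)
    (σ : BridgelandStabilityCondition C cls nrm)
    (m : ℕ) (F : Fin m → C) (ψ : Fin m → ℝ)
    -- the `F_i` are `σ`-stable with phases in `(0, 1]`: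
    (hψ : ∀ i, ψ i ∈ Set.Ioc (0 : ℝ) 1)
    (hstable : ∀ i, σ.IsStable (ψ i) (F i))
    -- `{F_1, …, F_m}` is an Ext-exceptional collection:
    (hendo : ∀ i, Module.finrank ℂ (F i ⟶ F i) = 1)
    (hexc : ∀ i, ∀ k : ℤ, k ≠ 0 → ∀ f : F i ⟶ (F i)⟦k⟧, f = 0)
    (hext : ∀ i j : Fin m, i ≠ j → ∀ k : ℤ, k ≤ 0 → ∀ f : F i ⟶ (F j)⟦k⟧, f = 0)
    -- the collection is full:
    (hfull : TriangulatedGenerates C (Set.range F))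
    -- the heart of `σ` is the extension closure of the collection:
    (hheart : σ.heart = extensionClosure C (Set.range F))
    -- `Ext¹` vanishes from higher to lower phase:
    (hext1 : ∀ i j : Fin m, ψ i < ψ j → ∀ f : F j ⟶ (F i)⟦(1 : ℤ)⟧, f = 0) :
    ∀ (X : C) (φ' : ℝ), σ.IsStable φ' X →
      ∃ (i : Fin m) (k : ℤ), Nonempty (X ≅ (F i)⟦k⟧) := by
  intro X φ' hX
  classical
  set n : ℤ := ⌈φ'⌉ - 1 with hn
  set φ : ℝ := φ' - (n : ℝ) with hφ
  have hφIoc : φ ∈ Set.Ioc (0 : ℝ) 1 := by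
    constructor
    · have h1 : (⌈φ'⌉ : ℝ) < φ' + 1 := Int.ceil_lt_add_one φ'
      rw [hφ, hn]
      push_cast
      linarith
    · have h2 : φ' ≤ (⌈φ'⌉ : ℝ) := Int.le_ceil φ'
      rw [hφ, hn]
      push_cast
      linarith
  have hYstable : σ.IsStable φ (X⟦(-n : ℤ)⟧) := by
    have hs := StmtAux.isStable_shift σ hX (-n)
    have harith : φ' + ((-n : ℤ) : ℝ) = φ := by rw [hφ]; push_cast; ring
    rwa [harith] at hs
  have hYP : X⟦(-n : ℤ)⟧ ∈ σ.P φ := hYstable.1.1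
  have hYheart : X⟦(-n : ℤ)⟧ ∈ extensionClosure C (Set.range F) := by
    rw [← hheart]
    refine Set.mem_sInter.2 fun T hTmem => hTmem.1 ?_
    exact Set.mem_biUnion hφIoc hYP
  have hYEC : StmtAux.EC (Set.range F) (X⟦(-n : ℤ)⟧) := by
    refine Set.mem_sInter.1 hYheart {Z | StmtAux.EC (Set.range F) Z} ?_
    exact ⟨fun Z hZ => StmtAux.EC.of hZ, fun A B e hA => StmtAux.EC.iso e hA,
      fun Z hZ => StmtAux.EC.zero hZ, fun T hT h1 h3 => StmtAux.EC.ext T hT h1 h3⟩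
  have hFP : ∀ l, F l ∈ σ.P (ψ l) := fun l => (hstable l).1.1
  have base1 : ∀ i j : Fin m, ∀ f : F i ⟶ (F j)⟦(-1 : ℤ)⟧, f = 0 := by
    intro i j f
    by_cases hij : i = j
    · subst hij; exact hexc i (-1) (by norm_num) f
    · exact hext i j hij (-1) (by norm_num) f
  have hlow := StmtAux.claimC hext1 base1 φ hYEC
    (fun i hi f => σ.homZero (ψ i) φ hi _ (hFP i) _ hYP f)
  have heqφ := StmtAux.claimC' hext1 base1 φ hlow
    (fun j hj f => σ.homZero φ (ψ j) hj _ hYP _ (hFP j) f)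
  obtain ⟨l, ⟨e⟩⟩ := StmtAux.endgame σ hFP φ heqφ hYstable
  refine ⟨l, n, ⟨?_⟩⟩
  calc X ≅ (X⟦(-n : ℤ)⟧)⟦n⟧ := ((shiftFunctorCompIsoId C (-n) n (by ring)).app X).symm
    _ ≅ (F l)⟦n⟧ := (shiftFunctor C n).mapIso e
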